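/- Let Q : ℝⁿ → ℝⁿ be C³ on a neighborhood of 0 and assume: (a) Q(t e₁) = 0 and ∂Q/∂u_q(t e₁) = 0 for every 1 ≤ q ≤ r and all sufficiently small |t|; (b) ∂Q_q/∂uᵢ(0) = 0 for all 1 ≤ q ≤ r and 1 ≤ i ≤ n; (c) ∂²Q_q/∂u_{q'}∂u_{q''}(0) = 0 for all 1 ≤ q, q', q'' ≤ r. Then there exist constants C > 0 and δ > 0 such that for all u with |u| ≤ δ: (i) |Q_q(u)| ≤ C (|u^D| + |u^♭|²) |u| for every 1 ≤ q ≤ r; (ii) |Q_p(u) − Σ_{p'=r+1}^{n} ∂Q_p/∂u_{p'}(0) u_{p'}| ≤ C (|u^D||u₁| + |u^♭|²) for every r+1 ≤ p ≤ n. -/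

import Mathlib

open Matrix

/-- The norm of the part `u^♭ = (u₂, …, uₙ)` of a vector `u ∈ ℝⁿ`
(the remaining components being put to zero). -/
noncomputable def normFlat {n : ℕ} (u : Fin n → ℝ) : ℝ :=
  ‖(fun i : Fin n => if 1 ≤ (i : ℕ) then u i else 0)‖

/-- The norm of the part `u^D = (u_{r+1}, …, uₙ)` of a vector `u ∈ ℝⁿ`
(the remaining components being put to zero). -/
noncomputable def normTail {n : ℕ} (r : ℕ) (u : Fin n → ℝ) : ℝ :=
  ‖(fun i : Fin n => if r ≤ (i : ℕ) then u i else 0)‖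

lemma clm_pi_eval {n : ℕ} {F : Type*} [NormedAddCommGroup F] [NormedSpace ℝ F]
    (T : (Fin n → ℝ) →L[ℝ] F) (w : Fin n → ℝ) :
    T w = ∑ i, w i • T (Pi.single i 1) := by
  have hw : w = ∑ i, w i • (Pi.single i 1 : Fin n → ℝ) := by
    funext j
    simp [Finset.sum_apply, Pi.single_apply]
  calc T w = T (∑ i, w i • (Pi.single i 1 : Fin n → ℝ)) := by rw [← hw]
  _ = ∑ i, w i • T (Pi.single i 1) := by simp [map_sum, _root_.map_smul]

lemma clm_pi_eval_coord {n : ℕ} (S : (Fin n → ℝ) →L[ℝ] (Fin n → ℝ)) (w : Fin n → ℝ) (q : Fin n) :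
    S w q = ∑ j, w j * S (Pi.single j 1) q := by
  rw [clm_pi_eval S w, Finset.sum_apply]
  simp

lemma clm2_pi_eval_coord {n : ℕ} (T : (Fin n → ℝ) →L[ℝ] ((Fin n → ℝ) →L[ℝ] (Fin n → ℝ)))
    (w w' : Fin n → ℝ) (q : Fin n) :
    T w w' q = ∑ i, ∑ j, w i * (w' j * T (Pi.single i 1) (Pi.single j 1) q) := by
  rw [clm_pi_eval T w, ContinuousLinearMap.sum_apply, Finset.sum_apply]
  refine Finset.sum_congr rfl fun i _ => ?_
  rw [ContinuousLinearMap.smul_apply, Pi.smul_apply, smul_eq_mul,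
    clm_pi_eval_coord (T (Pi.single i 1)) w' q, Finset.mul_sum]

lemma pi_norm_le_of_forall {n : ℕ} (u f : Fin n → ℝ) (h : ∀ i, f i = u i ∨ f i = 0) :
    ‖f‖ ≤ ‖u‖ := by
  refine (pi_norm_le_iff_of_nonneg (norm_nonneg u)).2 fun i => ?_
  rcases h i with h | h
  · rw [h]; exact norm_le_pi_norm u i
  · simp [h]

lemma clm_coord_le {n : ℕ} (S : (Fin n → ℝ) →L[ℝ] (Fin n → ℝ)) (w : Fin n → ℝ) (q : Fin n) :
    |S w q| ≤ ‖S‖ * ‖w‖ :=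
  le_trans (by simpa using norm_le_pi_norm (S w) q) (S.le_opNorm w)

lemma clm2_coord_le {n : ℕ} (T : (Fin n → ℝ) →L[ℝ] ((Fin n → ℝ) →L[ℝ] (Fin n → ℝ)))
    (x y : Fin n → ℝ) (q : Fin n) : |T x y q| ≤ ‖T‖ * ‖x‖ * ‖y‖ :=
  (clm_coord_le (T x) y q).trans
    (mul_le_mul_of_nonneg_right (T.le_opNorm x) (norm_nonneg y))

set_option maxHeartbeats 1000000 in
/-- Refined expansion of a strongly degenerate source term: if `Q` is `C³`
near `0`, `Q` and its partials `∂Q/∂u_q` (`q ≤ r`) vanish along the first axis near `0`,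
the rows `1,…,r` of `∇Q(0)` vanish and `∂²Q_q/∂u_{q'}∂u_{q''}(0) = 0` for `q,q',q'' ≤ r`,
then near `0`: `|Q_q(u)| ≤ C(|u^D| + |u^♭|²)|u|` for `q ≤ r` and
`|Q_p(u) − Σ_{p'>r} ∂Q_p/∂u_{p'}(0) u_{p'}| ≤ C(|u^D||u₁| + |u^♭|²)` for `p > r`. -/
theorem statement10 (n r : ℕ) (hn : 2 ≤ n) (hr : 1 ≤ r) (hrn : r < n)
    (Q : (Fin n → ℝ) → (Fin n → ℝ))
    (hQ : ContDiffAt ℝ 3 Q 0)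
    (ha : ∃ ε > 0, ∀ t : ℝ, |t| < ε →
      Q (t • (Pi.single (⟨0, by omega⟩ : Fin n) 1 : Fin n → ℝ)) = 0 ∧
      ∀ q : Fin n, (q : ℕ) < r →
        fderiv ℝ Q (t • (Pi.single (⟨0, by omega⟩ : Fin n) 1 : Fin n → ℝ))
          (Pi.single q 1) = 0)
    (hb : ∀ q i : Fin n, (q : ℕ) < r → fderiv ℝ Q 0 (Pi.single i 1) q = 0)
    (hc : ∀ q q' q'' : Fin n, (q : ℕ) < r → (q' : ℕ) < r → (q'' : ℕ) < r →
      fderiv ℝ (fun x => fderiv ℝ Q x (Pi.single q'' 1) q) 0 (Pi.single q' 1) = 0) :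
    ∃ C > 0, ∃ δ > 0, ∀ u : Fin n → ℝ, ‖u‖ ≤ δ →
      (∀ q : Fin n, (q : ℕ) < r →
        |Q u q| ≤ C * (normTail r u + normFlat u ^ 2) * ‖u‖) ∧
      (∀ p : Fin n, r ≤ (p : ℕ) →
        |Q u p - ∑ p' : Fin n,
            (if r ≤ (p' : ℕ) then fderiv ℝ Q 0 (Pi.single p' 1) p * u p' else 0)|
          ≤ C * (normTail r u * |u (⟨0, by omega⟩ : Fin n)| + normFlat u ^ 2)) := by
  classical
  obtain ⟨ε, hε, haxis⟩ := ha
  have hn0 : 0 < n := by omega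
  -- normalized versions of the axis hypotheses (definitional by proof irrelevance)
  have haxisQ : ∀ t : ℝ, |t| < ε →
      Q (t • (Pi.single (⟨0, hn0⟩ : Fin n) 1 : Fin n → ℝ)) = 0 :=
    fun t ht => (haxis t ht).1
  have haxisD : ∀ t : ℝ, |t| < ε → ∀ q : Fin n, (q : ℕ) < r →
      fderiv ℝ Q (t • (Pi.single (⟨0, hn0⟩ : Fin n) 1 : Fin n → ℝ)) (Pi.single q 1) = 0 :=
    fun t ht => (haxis t ht).2
  have hev : ∀ᶠ x in nhds (0 : Fin n → ℝ), ContDiffAt ℝ 3 Q x := hQ.eventually (by decide)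
  obtain ⟨L₁, t₁, ht₁, hlip₁⟩ :=
    (hQ.fderiv_right (m := 1) (by norm_num)).exists_lipschitzOnWith
  obtain ⟨L₂, t₂, ht₂, hlip₂⟩ :=
    ((hQ.fderiv_right (m := 2) (by norm_num)).fderiv_right (m := 1)
      (by norm_num)).exists_lipschitzOnWith
  obtain ⟨δ₁, hδ₁pos, hball⟩ :=
    Metric.mem_nhds_iff.1 (Filter.inter_mem (Filter.inter_mem ht₁ ht₂) hev)
  have hmem : ∀ z : Fin n → ℝ, ‖z‖ < δ₁ → z ∈ t₁ ∧ z ∈ t₂ ∧ ContDiffAt ℝ 3 Q z := by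
    intro z hz
    have := hball (by simpa [Metric.mem_ball, dist_zero_right] using hz)
    exact ⟨this.1.1, this.1.2, this.2⟩
  have hQdiff : ∀ z : Fin n → ℝ, ‖z‖ < δ₁ → HasFDerivAt Q (fderiv ℝ Q z) z := fun z hz =>
    ((hmem z hz).2.2.differentiableAt (by norm_num)).hasFDerivAt
  have hDQdiff : ∀ z : Fin n → ℝ, ‖z‖ < δ₁ →
      HasFDerivAt (fderiv ℝ Q) (fderiv ℝ (fderiv ℝ Q) z) z := fun z hz =>
    (((hmem z hz).2.2.fderiv_right (m := 1) (by norm_num)).differentiableAt (by norm_num)).hasFDerivAt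
  have h0δ : ‖(0 : Fin n → ℝ)‖ < δ₁ := by simpa using hδ₁pos
  have hlipn₁ : ∀ z z' : Fin n → ℝ, ‖z‖ < δ₁ → ‖z'‖ < δ₁ →
      ‖fderiv ℝ Q z - fderiv ℝ Q z'‖ ≤ L₁ * ‖z - z'‖ := by
    intro z z' hz hz'
    have := hlip₁.dist_le_mul z (hmem z hz).1 z' (hmem z' hz').1
    simpa [dist_eq_norm] using this
  have hlipn₂ : ∀ z z' : Fin n → ℝ, ‖z‖ < δ₁ → ‖z'‖ < δ₁ →
      ‖fderiv ℝ (fderiv ℝ Q) z - fderiv ℝ (fderiv ℝ Q) z'‖ ≤ L₂ * ‖z - z'‖ := by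
    intro z z' hz hz'
    have := hlip₂.dist_le_mul z (hmem z hz).2.1 z' (hmem z' hz').2.1
    simpa [dist_eq_norm] using this
  set M2 : ℝ := ‖fderiv ℝ (fderiv ℝ Q) 0‖ + L₂ * δ₁ with hM2
  have hM2nonneg : 0 ≤ M2 := by rw [hM2]; positivity
  have hM2bound : ∀ z : Fin n → ℝ, ‖z‖ < δ₁ → ‖fderiv ℝ (fderiv ℝ Q) z‖ ≤ M2 := by
    intro z hz
    have h1 := hlipn₂ z 0 hz h0δ
    rw [hM2]
    have h2 : ‖fderiv ℝ (fderiv ℝ Q) z‖ ≤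
        ‖fderiv ℝ (fderiv ℝ Q) z - fderiv ℝ (fderiv ℝ Q) 0‖ + ‖fderiv ℝ (fderiv ℝ Q) 0‖ := by
      have h := norm_sub_norm_le (fderiv ℝ (fderiv ℝ Q) z) (fderiv ℝ (fderiv ℝ Q) 0)
      linarith
    have h3 : (L₂ : ℝ) * ‖z - 0‖ ≤ L₂ * δ₁ := by
      have : ‖z - 0‖ ≤ δ₁ := by simpa using hz.le
      exact mul_le_mul_of_nonneg_left this L₂.coe_nonneg
    linarith
  have hdiffDQ0 : DifferentiableAt ℝ (fderiv ℝ Q) 0 :=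
    (hQ.fderiv_right (m := 1) (by norm_num)).differentiableAt (by norm_num)
  have hc' : ∀ q q' q'' : Fin n, (q : ℕ) < r → (q' : ℕ) < r → (q'' : ℕ) < r →
      fderiv ℝ (fderiv ℝ Q) 0 (Pi.single q' 1) (Pi.single q'' 1) q = 0 := by
    intro q q' q'' hq hq' hq''
    set L : ((Fin n → ℝ) →L[ℝ] (Fin n → ℝ)) →L[ℝ] ℝ :=
      (ContinuousLinearMap.proj (R := ℝ) (φ := fun _ : Fin n => ℝ) q).comp
        (ContinuousLinearMap.apply ℝ (Fin n → ℝ) (Pi.single q'' 1)) with hL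
    have hcomp : HasFDerivAt (fun x => fderiv ℝ Q x (Pi.single q'' 1) q)
        (L.comp (fderiv ℝ (fderiv ℝ Q) 0)) 0 :=
      L.hasFDerivAt.comp 0 hdiffDQ0.hasFDerivAt
    have h3 := hcomp.fderiv
    have h4 := hc q q' q'' hq hq' hq''
    rw [h3] at h4
    simpa [hL] using h4
  refine ⟨2 * L₁ + 2 * L₂ + M2 + 1, by positivity, min (δ₁ / 3) (ε / 2), by positivity, ?_⟩
  intro u hu
  set C : ℝ := 2 * L₁ + 2 * L₂ + M2 + 1 with hC
  have hCL₁ : (L₁ : ℝ) ≤ C := by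
    rw [hC]; nlinarith [L₁.coe_nonneg, L₂.coe_nonneg, hM2nonneg]
  set u0 : ℝ := u (⟨0, hn0⟩ : Fin n) with hu0
  have habs : |u0| ≤ ‖u‖ := by
    simpa [Real.norm_eq_abs] using norm_le_pi_norm u (⟨0, hn0⟩ : Fin n)
  set a : Fin n → ℝ := u0 • (Pi.single (⟨0, hn0⟩ : Fin n) 1 : Fin n → ℝ) with hadef
  set v : Fin n → ℝ := fun i : Fin n => if 1 ≤ (i : ℕ) then u i else 0 with hvdef
  set vD : Fin n → ℝ := fun i : Fin n => if r ≤ (i : ℕ) then u i else 0 with hvDdef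
  set vm : Fin n → ℝ := fun i : Fin n => if 1 ≤ (i : ℕ) ∧ (i : ℕ) < r then u i else 0 with hvmdef
  have hflat : normFlat u = ‖v‖ := by rw [hvdef]; rfl
  have htail : normTail r u = ‖vD‖ := by rw [hvDdef]; rfl
  have hsplit : v = vm + vD := by
    funext i
    simp only [hvdef, hvmdef, hvDdef, Pi.add_apply]
    rcases Nat.lt_or_ge (i : ℕ) 1 with h1 | h1
    · rw [if_neg (by omega), if_neg (by omega), if_neg (by omega)]; ring
    · rcases Nat.lt_or_ge (i : ℕ) r with h2 | h2
      · rw [if_pos h1, if_pos ⟨h1, h2⟩, if_neg (by omega)]; ring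
      · rw [if_pos h1, if_neg (by omega), if_pos h2]; ring
  have hu_eq : u = a + v := by
    funext i
    simp only [hadef, hvdef, Pi.add_apply, Pi.smul_apply, smul_eq_mul]
    rcases Nat.lt_or_ge (i : ℕ) 1 with h1 | h1
    · have hie : i = (⟨0, hn0⟩ : Fin n) := Fin.ext (by simp only [Fin.val_mk]; omega)
      rw [hie, Pi.single_eq_same, if_neg (by norm_num), hu0]; ring
    · have hie : i ≠ (⟨0, hn0⟩ : Fin n) := by
        intro h; rw [h] at h1; simp at h1
      rw [Pi.single_eq_of_ne hie, if_pos h1]; ring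
  have hv_le : ‖v‖ ≤ ‖u‖ := pi_norm_le_of_forall u v (fun i => by
    by_cases h : 1 ≤ (i : ℕ) <;> simp [hvdef, h])
  have hvD_le : ‖vD‖ ≤ ‖u‖ := pi_norm_le_of_forall u vD (fun i => by
    by_cases h : r ≤ (i : ℕ) <;> simp [hvDdef, h])
  have hvm_le : ‖vm‖ ≤ ‖v‖ := pi_norm_le_of_forall v vm (fun i => by
    by_cases h : 1 ≤ (i : ℕ) ∧ (i : ℕ) < r
    · left; simp [hvdef, hvmdef, h, h.1]
    · right; simp [hvmdef, h])
  have ha_le : ‖a‖ ≤ |u0| := by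
    refine (pi_norm_le_iff_of_nonneg (abs_nonneg u0)).2 fun i => ?_
    simp only [hadef, Pi.smul_apply, smul_eq_mul, Real.norm_eq_abs]
    rcases eq_or_ne i (⟨0, hn0⟩ : Fin n) with h | h
    · rw [h, Pi.single_eq_same, mul_one]
    · rw [Pi.single_eq_of_ne h, mul_zero, abs_zero]; exact abs_nonneg u0
  have hu3 : ‖u‖ ≤ δ₁ / 3 := le_trans hu (min_le_left _ _)
  have huε : ‖u‖ ≤ ε / 2 := le_trans hu (min_le_right _ _)
  have hu0ε : |u0| < ε := lt_of_le_of_lt (habs.trans huε) (by linarith)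
  have hnorm_pt : ∀ w : Fin n → ℝ, ‖w‖ ≤ ‖v‖ → ‖a + w‖ < δ₁ := by
    intro w hw
    calc ‖a + w‖ ≤ ‖a‖ + ‖w‖ := norm_add_le _ _
    _ ≤ ‖u‖ + ‖u‖ := add_le_add (ha_le.trans habs) (hw.trans hv_le)
    _ < δ₁ := by linarith
  have hnorm_pt2 : ∀ w : Fin n → ℝ, ‖w‖ ≤ ‖v‖ → ‖a + w‖ ≤ 2 * ‖u‖ := by
    intro w hw
    calc ‖a + w‖ ≤ ‖a‖ + ‖w‖ := norm_add_le _ _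
    _ ≤ ‖u‖ + ‖u‖ := add_le_add (ha_le.trans habs) (hw.trans hv_le)
    _ = 2 * ‖u‖ := by ring
  have hDQ0row : ∀ q : Fin n, (q : ℕ) < r → ∀ w : Fin n → ℝ, fderiv ℝ Q 0 w q = 0 := by
    intro q hq w
    rw [clm_pi_eval_coord (fderiv ℝ Q 0) w q]
    refine Finset.sum_eq_zero fun i _ => ?_
    rw [hb q i hq, mul_zero]
  have haxis_vm : ∀ t : ℝ, |t| < ε →
      fderiv ℝ Q (t • (Pi.single (⟨0, hn0⟩ : Fin n) 1 : Fin n → ℝ)) vm = 0 := by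
    intro t ht
    rw [clm_pi_eval (fderiv ℝ Q (t • (Pi.single (⟨0, hn0⟩ : Fin n) 1 : Fin n → ℝ))) vm]
    refine Finset.sum_eq_zero fun i _ => ?_
    by_cases hi : (i : ℕ) < r
    · rw [haxisD t ht i hi, smul_zero]
    · have hz : vm i = 0 := by rw [hvmdef]; exact if_neg (by omega)
      rw [hz, zero_smul]
  have hD2vm : ∀ q : Fin n, (q : ℕ) < r → fderiv ℝ (fderiv ℝ Q) 0 vm vm q = 0 := by
    intro q hq
    rw [clm2_pi_eval_coord (fderiv ℝ (fderiv ℝ Q) 0) vm vm q]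
    refine Finset.sum_eq_zero fun i _ => ?_
    by_cases hi : (i : ℕ) < r
    · refine Finset.sum_eq_zero fun j _ => ?_
      by_cases hj : (j : ℕ) < r
      · rw [hc' q i j hq hi hj, mul_zero, mul_zero]
      · have hz : vm j = 0 := by rw [hvmdef]; exact if_neg (by omega)
        rw [hz, zero_mul, mul_zero]
    · have hz : vm i = 0 := by rw [hvmdef]; exact if_neg (by omega)
      refine Finset.sum_eq_zero fun j _ => ?_
      rw [hz, zero_mul]
  -- Claim A : bound on |DQ(a + s•v) vm q|
  have claimA : ∀ q : Fin n, (q : ℕ) < r → ∀ s : ℝ, s ∈ Set.Icc (0 : ℝ) 1 →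
      |fderiv ℝ Q (a + s • v) vm q| ≤
        2 * L₂ * ‖u‖ * ‖v‖ ^ 2 + M2 * (‖vD‖ * ‖u‖) := by
    intro q hq s hs
    have hsabs : |s| ≤ 1 := abs_le.2 ⟨by linarith [hs.1], hs.2⟩
    have hsv : ‖s • v‖ ≤ ‖v‖ := by
      rw [norm_smul, Real.norm_eq_abs]
      nlinarith [norm_nonneg v]
    have hcnlt : ∀ τ : ℝ, τ ∈ Set.Icc (0 : ℝ) 1 → ‖a + τ • (s • v)‖ < δ₁ := by
      intro τ hτ
      apply hnorm_pt
      rw [norm_smul, Real.norm_eq_abs]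
      have : |τ| ≤ 1 := abs_le.2 ⟨by linarith [hτ.1], hτ.2⟩
      nlinarith [norm_nonneg (s • v), hsv, norm_nonneg v]
    have hcle2 : ∀ τ : ℝ, τ ∈ Set.Icc (0 : ℝ) 1 → ‖a + τ • (s • v)‖ ≤ 2 * ‖u‖ := by
      intro τ hτ
      apply hnorm_pt2
      rw [norm_smul, Real.norm_eq_abs]
      have : |τ| ≤ 1 := abs_le.2 ⟨by linarith [hτ.1], hτ.2⟩
      nlinarith [norm_nonneg (s • v), hsv, norm_nonneg v]
    have hm : ∀ τ ∈ Set.Icc (0 : ℝ) 1,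
        HasDerivWithinAt (fun τ : ℝ => fderiv ℝ Q (a + τ • (s • v)) vm q)
          (fderiv ℝ (fderiv ℝ Q) (a + τ • (s • v)) (s • v) vm q) (Set.Icc 0 1) τ := by
      intro τ hτ
      have h1 : HasDerivAt (fun τ : ℝ => a + τ • (s • v)) (s • v) τ := by
        simpa using ((hasDerivAt_id τ).smul_const (s • v)).const_add a
      have h2 : HasDerivAt (fun τ : ℝ => fderiv ℝ Q (a + τ • (s • v)))
          (fderiv ℝ (fderiv ℝ Q) (a + τ • (s • v)) (s • v)) τ :=
        (hDQdiff _ (hcnlt τ hτ)).comp_hasDerivAt τ h1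
      have h3 := (((ContinuousLinearMap.proj (R := ℝ) (φ := fun _ : Fin n => ℝ) q).comp
          (ContinuousLinearMap.apply ℝ (Fin n → ℝ) vm))).hasFDerivAt.comp_hasDerivAt τ h2
      exact h3.hasDerivWithinAt
    have hbound : ∀ τ ∈ Set.Ico (0 : ℝ) 1,
        ‖fderiv ℝ (fderiv ℝ Q) (a + τ • (s • v)) (s • v) vm q‖ ≤
          2 * L₂ * ‖u‖ * ‖v‖ ^ 2 + M2 * (‖vD‖ * ‖u‖) := by
      intro τ hτ
      have hτ' : τ ∈ Set.Icc (0 : ℝ) 1 := ⟨hτ.1, hτ.2.le⟩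
      set z : Fin n → ℝ := a + τ • (s • v) with hz
      have hzlt : ‖z‖ < δ₁ := hcnlt τ hτ'
      have hzle : ‖z‖ ≤ 2 * ‖u‖ := hcle2 τ hτ'
      have hdecomp : fderiv ℝ (fderiv ℝ Q) z (s • v) vm q =
          s * (fderiv ℝ (fderiv ℝ Q) z vm vm q) + s * (fderiv ℝ (fderiv ℝ Q) z vD vm q) := by
        rw [hsplit, smul_add, map_add, _root_.map_smul, _root_.map_smul]
        simp [ContinuousLinearMap.add_apply, ContinuousLinearMap.smul_apply]
      rw [Real.norm_eq_abs, hdecomp]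
      have e1 : |fderiv ℝ (fderiv ℝ Q) z vm vm q| ≤ L₂ * (2 * ‖u‖) * ‖v‖ ^ 2 := by
        have hzero := hD2vm q hq
        have hdiff : fderiv ℝ (fderiv ℝ Q) z vm vm q =
            (fderiv ℝ (fderiv ℝ Q) z - fderiv ℝ (fderiv ℝ Q) 0) vm vm q := by
          rw [ContinuousLinearMap.sub_apply, ContinuousLinearMap.sub_apply, Pi.sub_apply,
            hzero, sub_zero]
        rw [hdiff]
        have := clm2_coord_le (fderiv ℝ (fderiv ℝ Q) z - fderiv ℝ (fderiv ℝ Q) 0) vm vm q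
        have hL : ‖fderiv ℝ (fderiv ℝ Q) z - fderiv ℝ (fderiv ℝ Q) 0‖ ≤ L₂ * (2 * ‖u‖) := by
          have := hlipn₂ z 0 hzlt h0δ
          simp only [sub_zero] at this
          exact this.trans (mul_le_mul_of_nonneg_left hzle L₂.coe_nonneg)
        calc |(fderiv ℝ (fderiv ℝ Q) z - fderiv ℝ (fderiv ℝ Q) 0) vm vm q|
            ≤ ‖fderiv ℝ (fderiv ℝ Q) z - fderiv ℝ (fderiv ℝ Q) 0‖ * ‖vm‖ * ‖vm‖ := this
        _ ≤ (L₂ * (2 * ‖u‖)) * ‖v‖ * ‖v‖ := by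
            have h1 : ‖vm‖ ≤ ‖v‖ := hvm_le
            gcongr
        _ = L₂ * (2 * ‖u‖) * ‖v‖ ^ 2 := by ring
      have e2 : |fderiv ℝ (fderiv ℝ Q) z vD vm q| ≤ M2 * (‖vD‖ * ‖u‖) := by
        have := clm2_coord_le (fderiv ℝ (fderiv ℝ Q) z) vD vm q
        have hM := hM2bound z hzlt
        calc |fderiv ℝ (fderiv ℝ Q) z vD vm q|
            ≤ ‖fderiv ℝ (fderiv ℝ Q) z‖ * ‖vD‖ * ‖vm‖ := this
        _ ≤ M2 * ‖vD‖ * ‖u‖ := by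
            have h1 : ‖vm‖ ≤ ‖u‖ := hvm_le.trans hv_le
            gcongr
        _ = M2 * (‖vD‖ * ‖u‖) := by ring
      calc |s * (fderiv ℝ (fderiv ℝ Q) z vm vm q) + s * (fderiv ℝ (fderiv ℝ Q) z vD vm q)|
          ≤ |s * (fderiv ℝ (fderiv ℝ Q) z vm vm q)| + |s * (fderiv ℝ (fderiv ℝ Q) z vD vm q)| :=
            abs_add_le _ _
      _ ≤ |fderiv ℝ (fderiv ℝ Q) z vm vm q| + |fderiv ℝ (fderiv ℝ Q) z vD vm q| := by
          rw [abs_mul, abs_mul]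
          have b1 := abs_nonneg (fderiv ℝ (fderiv ℝ Q) z vm vm q)
          have b2 := abs_nonneg (fderiv ℝ (fderiv ℝ Q) z vD vm q)
          nlinarith
      _ ≤ 2 * L₂ * ‖u‖ * ‖v‖ ^ 2 + M2 * (‖vD‖ * ‖u‖) := by
          have := e1; have := e2; linarith
    have hMV := norm_image_sub_le_of_norm_deriv_le_segment' hm hbound 1
      (Set.right_mem_Icc.2 zero_le_one)
    have h00 : fderiv ℝ Q (a + (0:ℝ) • (s • v)) vm q = 0 := by
      have hz : a + (0:ℝ) • (s • v) = u0 • (Pi.single (⟨0, hn0⟩ : Fin n) 1 : Fin n → ℝ) := by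
        rw [hadef]; simp
      rw [hz]
      exact congrFun (haxis_vm u0 hu0ε) q
    have h11 : a + (1:ℝ) • (s • v) = a + s • v := by rw [one_smul]
    rw [h00, sub_zero, h11, Real.norm_eq_abs] at hMV
    simpa using hMV
  constructor
  · -- part (i)
    intro q hq
    have hf : ∀ s ∈ Set.Icc (0 : ℝ) 1,
        HasDerivWithinAt (fun s : ℝ => Q (a + s • v) q)
          (fderiv ℝ Q (a + s • v) v q) (Set.Icc 0 1) s := by
      intro s hs
      have hsabs : |s| ≤ 1 := abs_le.2 ⟨by linarith [hs.1], hs.2⟩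
      have hsv : ‖s • v‖ ≤ ‖v‖ := by
        rw [norm_smul, Real.norm_eq_abs]; nlinarith [norm_nonneg v]
      have h1 : HasDerivAt (fun s : ℝ => a + s • v) v s := by
        simpa using ((hasDerivAt_id s).smul_const v).const_add a
      have h2 : HasDerivAt (fun s : ℝ => Q (a + s • v)) (fderiv ℝ Q (a + s • v) v) s :=
        (hQdiff _ (hnorm_pt _ hsv)).comp_hasDerivAt s h1
      have h3 := ((ContinuousLinearMap.proj (R := ℝ) (φ := fun _ : Fin n => ℝ)
        q)).hasFDerivAt.comp_hasDerivAt s h2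
      exact h3.hasDerivWithinAt
    have hbound : ∀ s ∈ Set.Ico (0 : ℝ) 1,
        ‖fderiv ℝ Q (a + s • v) v q‖ ≤
          (2 * L₂ * ‖u‖ * ‖v‖ ^ 2 + M2 * (‖vD‖ * ‖u‖)) + 2 * L₁ * ‖u‖ * ‖vD‖ := by
      intro s hs
      have hs' : s ∈ Set.Icc (0 : ℝ) 1 := ⟨hs.1, hs.2.le⟩
      have hsabs : |s| ≤ 1 := abs_le.2 ⟨by linarith [hs.1], hs.2.le⟩
      have hsv : ‖s • v‖ ≤ ‖v‖ := by
        rw [norm_smul, Real.norm_eq_abs]; nlinarith [norm_nonneg v]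
      set z : Fin n → ℝ := a + s • v with hz
      have hzlt : ‖z‖ < δ₁ := hnorm_pt _ hsv
      have hzle : ‖z‖ ≤ 2 * ‖u‖ := hnorm_pt2 _ hsv
      have hdecomp : fderiv ℝ Q z v q = fderiv ℝ Q z vm q + fderiv ℝ Q z vD q := by
        rw [hsplit, map_add]
        simp
      rw [Real.norm_eq_abs, hdecomp]
      have e1 := claimA q hq s hs'
      have e2 : |fderiv ℝ Q z vD q| ≤ 2 * L₁ * ‖u‖ * ‖vD‖ := by
        have hzero := hDQ0row q hq vD
        have hdiff : fderiv ℝ Q z vD q = (fderiv ℝ Q z - fderiv ℝ Q 0) vD q := by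
          rw [ContinuousLinearMap.sub_apply, Pi.sub_apply, hzero, sub_zero]
        rw [hdiff]
        have hcl := clm_coord_le (fderiv ℝ Q z - fderiv ℝ Q 0) vD q
        have hL : ‖fderiv ℝ Q z - fderiv ℝ Q 0‖ ≤ L₁ * (2 * ‖u‖) := by
          have := hlipn₁ z 0 hzlt h0δ
          simp only [sub_zero] at this
          exact this.trans (mul_le_mul_of_nonneg_left hzle L₁.coe_nonneg)
        calc |(fderiv ℝ Q z - fderiv ℝ Q 0) vD q|
            ≤ ‖fderiv ℝ Q z - fderiv ℝ Q 0‖ * ‖vD‖ := hcl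
        _ ≤ (L₁ * (2 * ‖u‖)) * ‖vD‖ :=
            mul_le_mul_of_nonneg_right hL (norm_nonneg _)
        _ = 2 * L₁ * ‖u‖ * ‖vD‖ := by ring
      calc |fderiv ℝ Q z vm q + fderiv ℝ Q z vD q|
          ≤ |fderiv ℝ Q z vm q| + |fderiv ℝ Q z vD q| := abs_add_le _ _
      _ ≤ (2 * L₂ * ‖u‖ * ‖v‖ ^ 2 + M2 * (‖vD‖ * ‖u‖)) + 2 * L₁ * ‖u‖ * ‖vD‖ := by
          have := e1; have := e2; linarith
    have hMV := norm_image_sub_le_of_norm_deriv_le_segment' hf hbound 1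
      (Set.right_mem_Icc.2 zero_le_one)
    have h00 : Q (a + (0:ℝ) • v) q = 0 := by
      have hz0 : a + (0:ℝ) • v = u0 • (Pi.single (⟨0, hn0⟩ : Fin n) 1 : Fin n → ℝ) := by
        rw [hadef]; simp
      rw [hz0]
      exact congrFun (haxisQ u0 hu0ε) q
    have h11 : a + (1:ℝ) • v = u := by rw [one_smul, ← hu_eq]
    rw [h00, sub_zero, h11, Real.norm_eq_abs] at hMV
    rw [hflat, htail]
    have hfinal : (2 * L₂ * ‖u‖ * ‖v‖ ^ 2 + M2 * (‖vD‖ * ‖u‖)) + 2 * L₁ * ‖u‖ * ‖vD‖ * 1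
        ≤ C * (‖vD‖ + ‖v‖ ^ 2) * ‖u‖ := by
      rw [hC]
      nlinarith [L₁.coe_nonneg, L₂.coe_nonneg, hM2nonneg, norm_nonneg u, norm_nonneg v,
        norm_nonneg vD, sq_nonneg ‖v‖, mul_nonneg (norm_nonneg vD) (norm_nonneg u),
        mul_nonneg (mul_nonneg (norm_nonneg v) (norm_nonneg v)) (norm_nonneg u)]
    calc |Q u q| ≤ (2 * L₂ * ‖u‖ * ‖v‖ ^ 2 + M2 * (‖vD‖ * ‖u‖)) + 2 * L₁ * ‖u‖ * ‖vD‖ := by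
          simpa using hMV
    _ ≤ C * (‖vD‖ + ‖v‖ ^ 2) * ‖u‖ := by
        have := hfinal; linarith
  · -- part (ii)
    intro p hp
    have hsum : ∑ p' : Fin n,
        (if r ≤ (p' : ℕ) then fderiv ℝ Q 0 (Pi.single p' 1) p * u p' else 0)
        = fderiv ℝ Q 0 vD p := by
      rw [clm_pi_eval_coord (fderiv ℝ Q 0) vD p]
      refine Finset.sum_congr rfl fun i _ => ?_
      by_cases hi : r ≤ (i : ℕ)
      · rw [if_pos hi, hvDdef]
        simp only [if_pos hi]
        ring
      · rw [if_neg hi, hvDdef]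
        simp only [if_neg hi]
        ring
    have hseg : ∀ z ∈ segment ℝ a u, ‖z‖ < δ₁ ∧ ‖z - a‖ ≤ ‖v‖ := by
      intro z hz
      rw [segment_eq_image'] at hz
      obtain ⟨t, ht, rfl⟩ := hz
      have hua : u - a = v := by rw [hu_eq]; abel
      have htabs : |t| ≤ 1 := abs_le.2 ⟨by linarith [ht.1], ht.2⟩
      constructor
      · have : ‖t • (u - a)‖ ≤ ‖v‖ := by
          rw [hua, norm_smul, Real.norm_eq_abs]; nlinarith [norm_nonneg v]
        exact hnorm_pt _ this
      · simp only [add_sub_cancel_left]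
        rw [hua, norm_smul, Real.norm_eq_abs]; nlinarith [norm_nonneg v]
    have haδ : ‖a‖ < δ₁ := by
      have := hnorm_pt 0 (by simpa using norm_nonneg v)
      simpa using this
    have hrem := Convex.norm_image_sub_le_of_norm_hasFDerivWithin_le'
      (f := Q) (f' := fun z => fderiv ℝ Q z) (φ := fderiv ℝ Q a) (s := segment ℝ a u)
      (fun z hz => (hQdiff z (hseg z hz).1).hasFDerivWithinAt)
      (fun z hz => by
        have h1 := hlipn₁ z a (hseg z hz).1 haδ
        exact h1.trans (mul_le_mul_of_nonneg_left (hseg z hz).2 L₁.coe_nonneg))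
      (convex_segment a u) (left_mem_segment ℝ a u) (right_mem_segment ℝ a u)
    have hua : u - a = v := by rw [hu_eq]; abel
    have hQa : Q a = 0 := by rw [hadef]; exact haxisQ u0 hu0ε
    have hDa_vm : fderiv ℝ Q a vm = 0 := by rw [hadef]; exact haxis_vm u0 hu0ε
    have hDav : fderiv ℝ Q a v = fderiv ℝ Q a vD := by
      rw [hsplit, map_add, hDa_vm, zero_add]
    rw [hua, hQa, hDav] at hrem
    have hcomp : |Q u p - fderiv ℝ Q a vD p| ≤ L₁ * ‖v‖ * ‖v‖ := by
      have h1 := norm_le_pi_norm (Q u - 0 - fderiv ℝ Q a vD) p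
      have h2 : (Q u - 0 - fderiv ℝ Q a vD) p = Q u p - fderiv ℝ Q a vD p := by simp
      rw [h2, Real.norm_eq_abs] at h1
      exact h1.trans hrem
    have hsecond : |fderiv ℝ Q a vD p - fderiv ℝ Q 0 vD p| ≤ L₁ * |u0| * ‖vD‖ := by
      have hdiff : fderiv ℝ Q a vD p - fderiv ℝ Q 0 vD p
          = (fderiv ℝ Q a - fderiv ℝ Q 0) vD p := by
        simp [ContinuousLinearMap.sub_apply]
      rw [hdiff]
      have hcl := clm_coord_le (fderiv ℝ Q a - fderiv ℝ Q 0) vD p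
      have hL : ‖fderiv ℝ Q a - fderiv ℝ Q 0‖ ≤ L₁ * |u0| := by
        have h5 := hlipn₁ a 0 haδ h0δ
        simp only [sub_zero] at h5
        exact h5.trans (mul_le_mul_of_nonneg_left ha_le L₁.coe_nonneg)
      calc |(fderiv ℝ Q a - fderiv ℝ Q 0) vD p| ≤ ‖fderiv ℝ Q a - fderiv ℝ Q 0‖ * ‖vD‖ := hcl
      _ ≤ L₁ * |u0| * ‖vD‖ := mul_le_mul_of_nonneg_right hL (norm_nonneg _)
    rw [hsum, hflat, htail]
    show |Q u p - fderiv ℝ Q 0 vD p| ≤ C * (‖vD‖ * |u0| + ‖v‖ ^ 2)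
    calc |Q u p - fderiv ℝ Q 0 vD p|
        ≤ |Q u p - fderiv ℝ Q a vD p| + |fderiv ℝ Q a vD p - fderiv ℝ Q 0 vD p| :=
          abs_sub_le _ _ _
    _ ≤ L₁ * ‖v‖ * ‖v‖ + L₁ * |u0| * ‖vD‖ := add_le_add hcomp hsecond
    _ = L₁ * (‖vD‖ * |u0| + ‖v‖ ^ 2) := by ring
    _ ≤ C * (‖vD‖ * |u0| + ‖v‖ ^ 2) := mul_le_mul_of_nonneg_right hCL₁ (by positivity)
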